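/- On a symplectic manifold, ∂₊ commutes with the Lefschetz operator L, and L∂₋ commutes with L; however [L∂₋', L] = -L²∂₋ where ∂₋' = (H+R)∂₋. -/

import Mathlib

open Finset

/-- **Commutation of `∂₊` and `L∂₋` with `L`.**  `V` models the differential forms of a
symplectic manifold `(M^{2n}, ω)`: `Prj k` is the projection onto `k`-forms, `(L, Λ, H)`
the `sl(2)`-triple, and `d = ∂₊ + L∂₋` the Lefschetz decomposition of the exterior
derivative, with `Dp = ∂₊` preserving the `L`-power `r` and raising the primitive degree,
`Dm = ∂₋` lowering it; `R` multiplies `L^r B_s` by `r` and `Dm' = ∂₋' = (H+R)∂₋`.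
Then `[∂₊, L] = 0` and `[L∂₋, L] = 0` on every `L^{r,s}`, but
`[L∂₋', L] = -L²∂₋`. -/
theorem dplus_Ldminus_commute_with_L
    (n : ℕ) (V : Type*) [AddCommGroup V] [Module ℝ V]
    (Prj : ℤ → Module.End ℝ V)
    (hsum : ∑ k ∈ Finset.Icc (0 : ℤ) (2 * n), Prj k = 1)
    (horth : ∀ j k : ℤ, j ≠ k → Prj j * Prj k = 0)
    (hidem : ∀ k : ℤ, Prj k * Prj k = Prj k)
    (L Λ H : Module.End ℝ V)
    (hLdeg : ∀ k : ℤ, L * Prj k = Prj (k + 2) * L)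
    (hΛdeg : ∀ k : ℤ, Λ * Prj k = Prj (k - 2) * Λ)
    (hH : H = ∑ k ∈ Finset.Icc (0 : ℤ) (2 * n), ((n : ℤ) - k) • Prj k)
    (sl₁ : Λ * L - L * Λ = H)
    (sl₂ : H * Λ - Λ * H = (2 : ℤ) • Λ)
    (sl₃ : H * L - L * H = (-2 : ℤ) • L)
    (d : Module.End ℝ V)
    (hddeg : ∀ k : ℤ, d * Prj k = Prj (k + 1) * d)
    (hdL : d * L = L * d)
    (Dp Dm Dm' R : Module.End ℝ V)
    (hDpDm : ∀ (r s : ℕ), s ≤ n → ∀ B : V, Prj s B = B → Λ B = 0 →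
      (Prj ((s : ℤ) + 1) (Dp B) = Dp B ∧ Λ (Dp B) = 0) ∧
      (Prj ((s : ℤ) - 1) (Dm B) = Dm B ∧ Λ (Dm B) = 0) ∧
      Dp ((L ^ r) B) = (L ^ r) (Dp B) ∧
      Dm ((L ^ r) B) = (L ^ r) (Dm B) ∧
      d ((L ^ r) B) = (L ^ r) (Dp B) + (L ^ (r + 1)) (Dm B))
    (hR : ∀ (r s : ℕ), s ≤ n → ∀ B : V, Prj s B = B → Λ B = 0 →
      R ((L ^ r) B) = (r : ℤ) • (L ^ r) B)
    (hDm' : ∀ (r s : ℕ), s ≤ n → ∀ B : V, Prj s B = B → Λ B = 0 →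
      Dm' ((L ^ r) B) = ((n : ℝ) - r - s + 1) • (L ^ r) (Dm B)) :
    ∀ (r s : ℕ), s ≤ n → ∀ B : V, Prj s B = B → Λ B = 0 →
      (Dp * L - L * Dp) ((L ^ r) B) = 0 ∧
      ((L * Dm) * L - L * (L * Dm)) ((L ^ r) B) = 0 ∧
      ((L * Dm') * L - L * (L * Dm')) ((L ^ r) B)
        = -(((L * L) * Dm) ((L ^ r) B)) := by
  intro r s hs B hB hLam
  have hL : ∀ (m : ℕ) (x : V), L ((L ^ m) x) = (L ^ (m + 1)) x := by
    intro m x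
    rw [pow_succ', Module.End.mul_apply]
  obtain ⟨_, _, hDp0, hDm0, _⟩ := hDpDm r s hs B hB hLam
  obtain ⟨_, _, hDp1, hDm1, _⟩ := hDpDm (r + 1) s hs B hB hLam
  have hM1 := hDm' r s hs B hB hLam
  have hM2 := hDm' (r + 1) s hs B hB hLam
  refine ⟨?_, ?_, ?_⟩
  · simp only [LinearMap.sub_apply, Module.End.mul_apply, hL, hDp0, hDp1, sub_self]
  · simp only [LinearMap.sub_apply, Module.End.mul_apply, hL, hDm0, hDm1, sub_self]
  · simp only [LinearMap.sub_apply, Module.End.mul_apply, hL, hM1, hM2, hDm0, map_smul]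
    rw [← sub_smul]
    have h1 : ((n : ℝ) - ↑(r + 1) - ↑s + 1 - ((n : ℝ) - ↑r - ↑s + 1)) = (-1 : ℝ) := by
      push_cast; ring
    rw [h1, neg_one_smul]
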